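/- (Two-parameter family of observationally equivalent two-component bivariate CIMMs.) For a bivariate CIMM with C = 2, weights w_1, w_2 > 0, marginals P_x = w_1 f^(1)_x + w_2 f^(2)_x and P_y = w_1 f^(1)_y + w_2 f^(2)_y, and for any γ > 0 and 0 < w'_1 < 1 with w'_2 = 1 − w'_1, the functions g^(1)_x = P_x + γ w'_2 √(w_1 w_2/(w'_1 w'_2)) (f^(1)_x − f^(2)_x), g^(2)_x = P_x − γ w'_1 √(w_1 w_2/(w'_1 w'_2)) (f^(1)_x − f^(2)_x), g^(1)_y = P_y + (w'_2/γ) √(w_1 w_2/(w'_1 w'_2)) (f^(1)_y − f^(2)_y), g^(2)_y = P_y − (w'_1/γ) √(w_1 w_2/(w'_1 w'_2)) (f^(1)_y − f^(2)_y) satisfy ∑_{i=1}^2 w'_i g^(i)_x(x) g^(i)_y(y) = ∑_{i=1}^2 w_i f^(i)_x(x) f^(i)_y(y) pointwise, and each g^(i)_x, g^(i)_y integrates to 1. -/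

import Mathlib

open MeasureTheory

lemma integral_lin_comb {Xt : Type*} [MeasurableSpace Xt] (μ : Measure Xt)
    (f1 f2 : Xt → ℝ) (h1 : Integrable f1 μ) (h2 : Integrable f2 μ)
    (h1o : ∫ x, f1 x ∂μ = 1) (h2o : ∫ x, f2 x ∂μ = 1) (a b : ℝ) :
    ∫ x, (a * f1 x + b * f2 x) ∂μ = a + b := by
  rw [integral_add (h1.const_mul a) (h2.const_mul b), integral_const_mul,
    integral_const_mul, h1o, h2o, mul_one, mul_one]

/-- The two-parameter family (γ, w'₁) of Hall–Zhou (eq. A.2): the modified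
component functions g reproduce the same joint mixture density pointwise, and
each g integrates to 1. -/
theorem statement_15 {Xt Yt : Type*} [MeasurableSpace Xt] [MeasurableSpace Yt]
    (μ : Measure Xt) (ν : Measure Yt)
    (w1 w2 : ℝ) (hw1 : 0 < w1) (hw2 : 0 < w2) (hw : w1 + w2 = 1)
    (f1x f2x : Xt → ℝ) (f1y f2y : Yt → ℝ)
    (hf1x_int : Integrable f1x μ) (hf2x_int : Integrable f2x μ)
    (hf1y_int : Integrable f1y ν) (hf2y_int : Integrable f2y ν)
    (hf1x_one : ∫ x, f1x x ∂μ = 1) (hf2x_one : ∫ x, f2x x ∂μ = 1)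
    (hf1y_one : ∫ y, f1y y ∂ν = 1) (hf2y_one : ∫ y, f2y y ∂ν = 1)
    (γ w1' : ℝ) (hγ : 0 < γ) (hw1' : 0 < w1') (hw1'lt : w1' < 1) :
    (∀ (x : Xt) (y : Yt),
      w1' * ((w1 * f1x x + w2 * f2x x) +
              γ * (1 - w1') * Real.sqrt (w1 * w2 / (w1' * (1 - w1'))) * (f1x x - f2x x)) *
            ((w1 * f1y y + w2 * f2y y) +
              ((1 - w1') / γ) * Real.sqrt (w1 * w2 / (w1' * (1 - w1'))) * (f1y y - f2y y)) +
      (1 - w1') * ((w1 * f1x x + w2 * f2x x) -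
              γ * w1' * Real.sqrt (w1 * w2 / (w1' * (1 - w1'))) * (f1x x - f2x x)) *
            ((w1 * f1y y + w2 * f2y y) -
              (w1' / γ) * Real.sqrt (w1 * w2 / (w1' * (1 - w1'))) * (f1y y - f2y y))
        = w1 * f1x x * f1y y + w2 * f2x x * f2y y) ∧
    (∫ x, ((w1 * f1x x + w2 * f2x x) +
        γ * (1 - w1') * Real.sqrt (w1 * w2 / (w1' * (1 - w1'))) * (f1x x - f2x x)) ∂μ = 1) ∧
    (∫ x, ((w1 * f1x x + w2 * f2x x) -
        γ * w1' * Real.sqrt (w1 * w2 / (w1' * (1 - w1'))) * (f1x x - f2x x)) ∂μ = 1) ∧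
    (∫ y, ((w1 * f1y y + w2 * f2y y) +
        ((1 - w1') / γ) * Real.sqrt (w1 * w2 / (w1' * (1 - w1'))) * (f1y y - f2y y)) ∂ν = 1) ∧
    (∫ y, ((w1 * f1y y + w2 * f2y y) -
        (w1' / γ) * Real.sqrt (w1 * w2 / (w1' * (1 - w1'))) * (f1y y - f2y y)) ∂ν = 1) := by
  have hw2' : 0 < 1 - w1' := by linarith
  set s := Real.sqrt (w1 * w2 / (w1' * (1 - w1'))) with hs
  have hs2 : s ^ 2 = w1 * w2 / (w1' * (1 - w1')) := by
    rw [hs, Real.sq_sqrt]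
    positivity
  have hγ0 : γ ≠ 0 := ne_of_gt hγ
  have hw1'0 : w1' ≠ 0 := ne_of_gt hw1'
  have hw2'0 : (1 - w1') ≠ 0 := ne_of_gt hw2'
  refine ⟨fun x y => ?_, ?_, ?_, ?_, ?_⟩
  · have key : w1' * (1 - w1') * s ^ 2 = w1 * w2 := by
      rw [hs2]; field_simp
    have hgg : γ * γ⁻¹ = 1 := mul_inv_cancel₀ hγ0
    linear_combination key * ((f1x x - f2x x) * (f1y y - f2y y)) +
      (w1 * f1x x * f1y y + w2 * f2x x * f2y y) * hw +
      (w1' * (1 - w1') * s ^ 2 * ((f1x x - f2x x) * (f1y y - f2y y))) * hgg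
  · have := integral_lin_comb μ f1x f2x hf1x_int hf2x_int hf1x_one hf2x_one
      (w1 + γ * (1 - w1') * s) (w2 - γ * (1 - w1') * s)
    rw [show (w1 + γ * (1 - w1') * s) + (w2 - γ * (1 - w1') * s) = 1 by ring_nf; linarith] at this
    refine Eq.trans ?_ this
    apply integral_congr_ae
    filter_upwards with t
    ring
  · have := integral_lin_comb μ f1x f2x hf1x_int hf2x_int hf1x_one hf2x_one
      (w1 - γ * w1' * s) (w2 + γ * w1' * s)
    rw [show (w1 - γ * w1' * s) + (w2 + γ * w1' * s) = 1 by ring_nf; linarith] at this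
    refine Eq.trans ?_ this
    apply integral_congr_ae
    filter_upwards with t
    ring
  · have := integral_lin_comb ν f1y f2y hf1y_int hf2y_int hf1y_one hf2y_one
      (w1 + (1 - w1') / γ * s) (w2 - (1 - w1') / γ * s)
    rw [show (w1 + (1 - w1') / γ * s) + (w2 - (1 - w1') / γ * s) = 1 by ring_nf; linarith] at this
    refine Eq.trans ?_ this
    apply integral_congr_ae
    filter_upwards with t
    ring
  · have := integral_lin_comb ν f1y f2y hf1y_int hf2y_int hf1y_one hf2y_one
      (w1 - w1' / γ * s) (w2 + w1' / γ * s)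
    rw [show (w1 - w1' / γ * s) + (w2 + w1' / γ * s) = 1 by ring_nf; linarith] at this
    refine Eq.trans ?_ this
    apply integral_congr_ae
    filter_upwards with t
    ring
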